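/- (Sandwich inclusions for perturbed approximating regions) Let ε ∈ (0,1) and let h = (h_p)_{p∈S} ∈ ∏_{p∈S} H_p be block lower-triangular with h_∞ ∈ H̃_{∞,ε} ∩ H̃_{∞,ε}^{-1} and h_p ∈ H_p(ℤ_p) for all p ∈ S_f. Then for every collection of approximating functions ψ = (ψ_p)_{p∈S} and every T = (T_p) ∈ ℝ_{≥1} × ∏_{p∈S_f} {p^k : k ∈ ℕ}, one has E_{ψ⁻_ε}(T⁻) ⊆ h·E_ψ(T) ⊆ E_{ψ⁺_ε}(T⁺), where T⁻ = ((1+ε)^{-1}T_∞, T_{p₁}, …, T_{p_s}) and T⁺ = ((1+ε)T_∞, T_{p₁}, …, T_{p_s}). -/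

import Mathlib

open MeasureTheory Matrix

noncomputable section

/-- `z` belongs to the ring of `S`-integers `ℤ_S = ℤ[1/P]`,
where `P` is the product of the finite primes in `S`. -/
def IsZS (P : ℕ) (z : ℚ) : Prop := ∃ (a : ℤ) (k : ℕ), z = (a : ℚ) / (P : ℚ) ^ k

/-- A collection of approximating functions `ψ = (ψ_p)_{p ∈ S}`:
each `ψ_p : ℝ_{>0} → ℝ_{>0}` is non-increasing and `≡ 1` on `(0,1]`
(we extend by `1` on `t ≤ 1`); moreover for each finite place `p`,
`ψ_p` is constant on `{p^{kn}, …, p^{kn+n-1}}` for every `k ∈ ℤ` and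
takes values in `p^{mℤ}` on `p^ℤ`. -/
structure ApproxFamily (m n s : ℕ) (p : Fin s → ℕ) : Type where
  psiR : ℝ → ℝ
  psiP : Fin s → ℝ → ℝ
  posR : ∀ t, 0 < psiR t
  antiR : ∀ ⦃t₁ t₂ : ℝ⦄, 0 < t₁ → t₁ ≤ t₂ → psiR t₂ ≤ psiR t₁
  oneR : ∀ ⦃t : ℝ⦄, t ≤ 1 → psiR t = 1
  posP : ∀ i t, 0 < psiP i t
  antiP : ∀ i ⦃t₁ t₂ : ℝ⦄, 0 < t₁ → t₁ ≤ t₂ → psiP i t₂ ≤ psiP i t₁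
  oneP : ∀ i ⦃t : ℝ⦄, t ≤ 1 → psiP i t = 1
  constP : ∀ i (k : ℤ) (j : ℕ), j < n →
    psiP i ((p i : ℝ) ^ (k * n + j : ℤ)) = psiP i ((p i : ℝ) ^ (k * n : ℤ))
  valsP : ∀ i (k : ℤ), ∃ l : ℤ, psiP i ((p i : ℝ) ^ k) = (p i : ℝ) ^ (m * l : ℤ)

/-- The real components of the diagonal embedding of a rational vector. -/
def ratR {k : ℕ} (q : Fin k → ℚ) : Fin k → ℝ := fun j => (q j : ℝ)

/-- The `p i`-adic components of the diagonal embedding of a rational vector. -/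
def ratP {s : ℕ} (p : Fin s → ℕ) [∀ i, Fact (p i).Prime] {k : ℕ} (i : Fin s)
    (q : Fin k → ℚ) : Fin k → ℚ_[p i] := fun j => (q j : ℚ_[p i])

/-- The region `E_f(T) ⊆ ℚ_S^m × ℚ_S^n` cut out by `‖x‖_p^m ≤ f_p(‖y‖_p^n)` and
`‖y‖_p^n ≤ T_p` for all `p ∈ S` (product coordinates). -/
def Eprod (m n : ℕ) {s : ℕ} (p : Fin s → ℕ) [∀ i, Fact (p i).Prime]
    (fR : ℝ → ℝ) (fP : Fin s → ℝ → ℝ) (TR : ℝ) (TP : Fin s → ℝ) :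
    Set (((Fin m → ℝ) × ∀ i, Fin m → ℚ_[p i]) × ((Fin n → ℝ) × ∀ i, Fin n → ℚ_[p i])) :=
  {xy | ‖xy.1.1‖ ^ m ≤ fR (‖xy.2.1‖ ^ n) ∧ ‖xy.2.1‖ ^ n ≤ TR ∧
      ∀ i, ‖xy.1.2 i‖ ^ m ≤ fP i (‖xy.2.2 i‖ ^ n) ∧ ‖xy.2.2 i‖ ^ n ≤ TP i}

/-- The region `E_f(T) ⊆ ℚ_S^{m+n}`, where the first `m` coordinates play the role of
`x` and the last `n` coordinates the role of `y`. -/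
def Efull (m n : ℕ) {s : ℕ} (p : Fin s → ℕ) [∀ i, Fact (p i).Prime]
    (fR : ℝ → ℝ) (fP : Fin s → ℝ → ℝ) (TR : ℝ) (TP : Fin s → ℝ) :
    Set ((Fin (m + n) → ℝ) × ∀ i, Fin (m + n) → ℚ_[p i]) :=
  {v | ‖fun a : Fin m => v.1 (Fin.castAdd n a)‖ ^ m
        ≤ fR (‖fun b : Fin n => v.1 (Fin.natAdd m b)‖ ^ n) ∧
      ‖fun b : Fin n => v.1 (Fin.natAdd m b)‖ ^ n ≤ TR ∧
      ∀ i, ‖fun a : Fin m => v.2 i (Fin.castAdd n a)‖ ^ m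
            ≤ fP i (‖fun b : Fin n => v.2 i (Fin.natAdd m b)‖ ^ n) ∧
          ‖fun b : Fin n => v.2 i (Fin.natAdd m b)‖ ^ n ≤ TP i}

/-- The operator norm of a real matrix acting on sup-normed spaces. -/
def opNorm {k l : ℕ} (M : Matrix (Fin k) (Fin l) ℝ) : ℝ :=
  ‖LinearMap.toContinuousLinearMap M.mulVecLin‖

/-- An element of the group `𝐇 = ∏_{p ∈ S} H_p` of block lower-triangular matrices,
given by its blocks at each place. -/
structure HElem (m n : ℕ) (s : ℕ) (p : Fin s → ℕ) [∀ i, Fact (p i).Prime] : Type where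
  aR : Matrix (Fin m) (Fin m) ℝ
  bR : Matrix (Fin n) (Fin m) ℝ
  cR : Matrix (Fin n) (Fin n) ℝ
  aP : ∀ i, Matrix (Fin m) (Fin m) ℚ_[p i]
  bP : ∀ i, Matrix (Fin n) (Fin m) ℚ_[p i]
  cP : ∀ i, Matrix (Fin n) (Fin n) ℚ_[p i]

/-- The action of an element of `𝐇` on `ℚ_S^m × ℚ_S^n`:
`h·(x, y) = (α x, β x + γ y)` at each place. -/
def HElem.act {m n s : ℕ} {p : Fin s → ℕ} [∀ i, Fact (p i).Prime] (h : HElem m n s p)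
    (xy : ((Fin m → ℝ) × ∀ i, Fin m → ℚ_[p i]) × ((Fin n → ℝ) × ∀ i, Fin n → ℚ_[p i])) :
    ((Fin m → ℝ) × ∀ i, Fin m → ℚ_[p i]) × ((Fin n → ℝ) × ∀ i, Fin n → ℚ_[p i]) :=
  ((h.aR.mulVec xy.1.1, fun i => (h.aP i).mulVec (xy.1.2 i)),
   (h.bR.mulVec xy.1.1 + h.cR.mulVec xy.2.1,
    fun i => (h.bP i).mulVec (xy.1.2 i) + (h.cP i).mulVec (xy.2.2 i)))

/-- Membership in `H̃_{∞,ε}`: operator norm bounds on the blocks. -/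
def inHtilde (m n : ℕ) (ε : ℝ) (α : Matrix (Fin m) (Fin m) ℝ) (β : Matrix (Fin n) (Fin m) ℝ)
    (γ : Matrix (Fin n) (Fin n) ℝ) : Prop :=
  opNorm α ^ m ≤ 1 + ε ∧ opNorm γ ^ n ≤ 1 + ε / 2 ∧ opNorm β ≤ ε / (4 * n)

/-- `h ∈ (H̃_{∞,ε} ∩ H̃_{∞,ε}⁻¹) × ∏_{p ∈ S_f} H_p(ℤ_p)`. -/
def HElem.isAdmissible {m n s : ℕ} {p : Fin s → ℕ} [∀ i, Fact (p i).Prime]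
    (h : HElem m n s p) (ε : ℝ) : Prop :=
  IsUnit h.aR.det ∧ IsUnit h.cR.det ∧
  inHtilde m n ε h.aR h.bR h.cR ∧
  inHtilde m n ε h.aR⁻¹ (-(h.cR⁻¹ * h.bR * h.aR⁻¹)) h.cR⁻¹ ∧
  ∀ i, ((∀ a b, ‖h.aP i a b‖ ≤ 1) ∧ ‖(h.aP i).det‖ = 1) ∧
      ((∀ a b, ‖h.cP i a b‖ ≤ 1) ∧ ‖(h.cP i).det‖ = 1) ∧
      (∀ a b, ‖h.bP i a b‖ ≤ 1)

end

section Helpers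

lemma psi_le_one (f : ℝ → ℝ)
    (hanti : ∀ ⦃t₁ t₂ : ℝ⦄, 0 < t₁ → t₁ ≤ t₂ → f t₂ ≤ f t₁)
    (hone : ∀ ⦃t : ℝ⦄, t ≤ 1 → f t = 1) (t : ℝ) : f t ≤ 1 := by
  rcases le_total t 1 with h | h
  · exact (hone h).le
  · calc f t ≤ f 1 := hanti one_pos h
      _ = 1 := hone le_rfl

lemma psi_mono (f : ℝ → ℝ)
    (hanti : ∀ ⦃t₁ t₂ : ℝ⦄, 0 < t₁ → t₁ ≤ t₂ → f t₂ ≤ f t₁)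
    (hone : ∀ ⦃t : ℝ⦄, t ≤ 1 → f t = 1) {t u : ℝ} (h : u ≤ max t 1) : f t ≤ f u := by
  rcases le_or_gt u 1 with hu | hu
  · rw [hone hu]; exact psi_le_one f hanti hone t
  · have hut : u ≤ t := by
      rcases le_or_gt 1 t with h1 | h1
      · rwa [max_eq_left h1] at h
      · rw [max_eq_right h1.le] at h; linarith
    have h0u : 0 < u := lt_trans one_pos hu
    exact hanti h0u hut

lemma key_ineq (n : ℕ) (hn : 0 < n) (ε : ℝ) (hε₀ : 0 < ε) (hε₁ : ε < 1)
    {a v W : ℝ} (ha : 0 ≤ a) (hv : 0 ≤ v) (han : a ^ n ≤ 1 + ε / 2)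
    (hW : 1 ≤ W) (hvW : (1 + ε) * v ^ n ≤ W) :
    (ε / (4 * n) + a * v) ^ n ≤ W := by
  have hnR : (0:ℝ) < n := Nat.cast_pos.mpr hn
  have hW0 : 0 ≤ W := le_trans zero_le_one hW
  -- z := W^(1/n)
  set z : ℝ := W ^ ((n : ℝ)⁻¹) with hz
  have hzn : z ^ n = W := Real.rpow_inv_natCast_pow hW0 hn.ne'
  have hz1 : 1 ≤ z := by
    rw [hz]
    exact Real.one_le_rpow hW (by positivity)
  have hz0 : (0:ℝ) ≤ z := le_trans zero_le_one hz1
  have hn1 : (1:ℝ) ≤ n := by exact_mod_cast hn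
  have hq : ε / (4 * n) ≤ ε / 4 := by
    apply div_le_div_of_nonneg_left hε₀.le (by norm_num)
    nlinarith
  have hq0 : 0 ≤ ε / (4 * n) := by positivity
  -- Bernoulli: (1 - ε/(4n))^n ≥ 1 - ε/4
  have hb : 1 - ε / 4 ≤ (1 - ε / (4 * n)) ^ n := by
    have h2 := one_add_mul_le_pow (a := -(ε / (4 * n))) (by nlinarith) n
    have hc : (n:ℝ) * -(ε / (4 * n)) = -(ε/4) := by field_simp
    rw [hc] at h2
    calc 1 - ε/4 = 1 + -(ε/4) := by ring
      _ ≤ (1 + -(ε / (4 * n))) ^ n := h2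
      _ = (1 - ε / (4 * n)) ^ n := by rw [← sub_eq_add_neg]
  have hr : (1 + ε / 2) / (1 + ε) ≤ (1 - ε / (4 * n)) ^ n := by
    have h1 : (1 + ε / 2) / (1 + ε) ≤ 1 - ε / 4 := by
      rw [div_le_iff₀ (by linarith)]
      nlinarith
    linarith
  -- (a*v)^n ≤ ((1 - ε/(4n)) * z)^n
  have hav : (a * v) ^ n ≤ ((1 - ε / (4 * n)) * z) ^ n := by
    have h2 : (a * v) ^ n ≤ (1 + ε / 2) / (1 + ε) * W := by
      rw [mul_pow]
      calc a ^ n * v ^ n ≤ (1 + ε / 2) * v ^ n := by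
            apply mul_le_mul_of_nonneg_right han (by positivity)
        _ = (1 + ε / 2)/(1+ε) * ((1+ε) * v ^ n) := by field_simp
        _ ≤ (1 + ε / 2)/(1+ε) * W := by
            apply mul_le_mul_of_nonneg_left hvW (by positivity)
    calc (a*v)^n ≤ (1 + ε / 2) / (1 + ε) * W := h2
      _ ≤ (1 - ε / (4*n)) ^ n * W := mul_le_mul_of_nonneg_right hr hW0
      _ = ((1 - ε / (4*n)) * z) ^ n := by rw [mul_pow, hzn]
  have hav' : a * v ≤ (1 - ε / (4 * n)) * z := by
    have h4n : 0 < 1 - ε / (4 * n) := by linarith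
    exact le_of_pow_le_pow_left₀ hn.ne' (by positivity) hav
  have hfin : ε / (4 * n) + a * v ≤ z := by
    linarith [hav', mul_nonneg hq0 (sub_nonneg.2 hz1)]
  calc (ε / (4*n) + a * v) ^ n ≤ z ^ n :=
      pow_le_pow_left₀ (by positivity) hfin n
    _ = W := hzn

lemma opNorm_mulVec_le {k l : ℕ} (M : Matrix (Fin k) (Fin l) ℝ) (v : Fin l → ℝ) :
    ‖M.mulVec v‖ ≤ opNorm M * ‖v‖ := by
  have := (LinearMap.toContinuousLinearMap M.mulVecLin).le_opNorm v
  simpa [opNorm] using this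

end Helpers

section Padic
variable {P : ℕ} [Fact P.Prime]

lemma padic_sum_norm_le {ι : Type*} (s : Finset ι) (f : ι → ℚ_[P]) {C : ℝ} (hC : 0 ≤ C)
    (h : ∀ i ∈ s, ‖f i‖ ≤ C) : ‖∑ i ∈ s, f i‖ ≤ C :=
  IsUltrametricDist.norm_sum_le_of_forall_le_of_nonneg hC h

lemma padic_mulVec_le {k l : ℕ} (M : Matrix (Fin k) (Fin l) ℚ_[P])
    (hM : ∀ a b, ‖M a b‖ ≤ 1) (v : Fin l → ℚ_[P]) {C : ℝ} (hC : 0 ≤ C)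
    (hv : ‖v‖ ≤ C) : ‖M.mulVec v‖ ≤ C := by
  rw [pi_norm_le_iff_of_nonneg hC]
  intro a
  rw [Matrix.mulVec, dotProduct]
  apply padic_sum_norm_le _ _ hC
  intro b _
  calc ‖M a b * v b‖ = ‖M a b‖ * ‖v b‖ := norm_mul _ _
    _ ≤ 1 * C := by
        apply mul_le_mul (hM a b) ((norm_le_pi_norm v b).trans hv) (norm_nonneg _) zero_le_one
    _ = C := one_mul C

lemma padic_det_norm_le {k : ℕ} (M : Matrix (Fin k) (Fin k) ℚ_[P])
    (hM : ∀ a b, ‖M a b‖ ≤ 1) : ‖M.det‖ ≤ 1 := by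
  rw [Matrix.det_apply]
  apply padic_sum_norm_le _ _ zero_le_one
  intro σ _
  have hp : ‖∏ i, M (σ i) i‖ ≤ 1 := by
    rw [norm_prod]
    exact Finset.prod_le_one (fun i _ => norm_nonneg _) (fun i _ => hM _ _)
  rcases Int.units_eq_one_or (Equiv.Perm.sign σ) with h | h <;> rw [h] <;>
    simp only [one_smul, Units.neg_smul, norm_neg] <;> exact hp

lemma padic_mul_entry_le {k l r : ℕ} (M : Matrix (Fin k) (Fin l) ℚ_[P])
    (N : Matrix (Fin l) (Fin r) ℚ_[P]) (hM : ∀ a b, ‖M a b‖ ≤ 1)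
    (hN : ∀ a b, ‖N a b‖ ≤ 1) : ∀ a b, ‖(M * N) a b‖ ≤ 1 := by
  intro a b
  rw [Matrix.mul_apply]
  apply padic_sum_norm_le _ _ zero_le_one
  intro c _
  calc ‖M a c * N c b‖ = ‖M a c‖ * ‖N c b‖ := norm_mul _ _
    _ ≤ 1 * 1 := mul_le_mul (hM a c) (hN c b) (norm_nonneg _) zero_le_one
    _ = 1 := one_mul 1

lemma padic_inv_entry_le {k : ℕ} (M : Matrix (Fin k) (Fin k) ℚ_[P])
    (hM : ∀ a b, ‖M a b‖ ≤ 1) (hdet : ‖M.det‖ = 1) : ∀ a b, ‖M⁻¹ a b‖ ≤ 1 := by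
  have hd0 : M.det ≠ 0 := by
    intro h; rw [h] at hdet; simp at hdet
  intro a b
  rw [Matrix.inv_def, Matrix.smul_apply, Ring.inverse_eq_inv', smul_eq_mul, norm_mul,
    norm_inv, hdet, inv_one, one_mul]
  rw [Matrix.adjugate_apply]
  apply padic_det_norm_le
  intro a' b'
  rw [Matrix.updateRow_apply]
  split
  · rcases eq_or_ne b' a with h | h
    · simp [Pi.single_apply, h]
    · simp [Pi.single_apply, h]
  · exact hM a' b'
end Padic
section Act
variable {K : Type*} [CommRing K]

lemma act_inv_fst {m : ℕ} (A : Matrix (Fin m) (Fin m) K) (hA : IsUnit A.det)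
    (x : Fin m → K) : A.mulVec (A⁻¹.mulVec x) = x := by
  rw [Matrix.mulVec_mulVec, Matrix.mul_nonsing_inv _ hA, Matrix.one_mulVec]

lemma act_inv_snd {m n : ℕ} (A : Matrix (Fin m) (Fin m) K) (B : Matrix (Fin n) (Fin m) K)
    (C : Matrix (Fin n) (Fin n) K) (hA : IsUnit A.det) (hC : IsUnit C.det)
    (x : Fin m → K) (y : Fin n → K) :
    B.mulVec (A⁻¹.mulVec x) +
      C.mulVec ((-(C⁻¹ * B * A⁻¹)).mulVec x + C⁻¹.mulVec y) = y := by
  rw [Matrix.mulVec_add, Matrix.neg_mulVec, Matrix.mulVec_neg, Matrix.mulVec_mulVec,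
    Matrix.mulVec_mulVec, Matrix.mulVec_mulVec, ← Matrix.mul_assoc,
    ← Matrix.mul_assoc, Matrix.mul_nonsing_inv _ hC, Matrix.one_mul,
    Matrix.one_mulVec]
  abel
end Act

section Steps

lemma sprime_bound {m n : ℕ} (hn : 0 < n) {ε : ℝ} (hε₀ : 0 < ε) (hε₁ : ε < 1)
    (β : Matrix (Fin n) (Fin m) ℝ) (γ : Matrix (Fin n) (Fin n) ℝ)
    (hβ : opNorm β ≤ ε / (4 * n)) (hγ : opNorm γ ^ n ≤ 1 + ε / 2)
    (x : Fin m → ℝ) (y : Fin n → ℝ) (hx : ‖x‖ ≤ 1) {W : ℝ} (hW : 1 ≤ W)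
    (hvW : (1 + ε) * ‖y‖ ^ n ≤ W) : ‖β.mulVec x + γ.mulVec y‖ ^ n ≤ W := by
  have hq0 : (0:ℝ) ≤ ε / (4 * n) := by positivity
  have h1 : ‖β.mulVec x + γ.mulVec y‖ ≤ ε / (4 * n) + opNorm γ * ‖y‖ := by
    calc ‖β.mulVec x + γ.mulVec y‖ ≤ ‖β.mulVec x‖ + ‖γ.mulVec y‖ := norm_add_le _ _
      _ ≤ ε / (4 * n) + opNorm γ * ‖y‖ := by
          gcongr
          calc ‖β.mulVec x‖ ≤ opNorm β * ‖x‖ := opNorm_mulVec_le β x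
            _ ≤ (ε / (4 * n)) * 1 := by
                apply mul_le_mul hβ hx (norm_nonneg _) hq0
            _ = ε / (4 * n) := mul_one _
          exact opNorm_mulVec_le γ y
  calc ‖β.mulVec x + γ.mulVec y‖ ^ n ≤ (ε / (4 * n) + opNorm γ * ‖y‖) ^ n :=
      pow_le_pow_left₀ (norm_nonneg _) h1 n
    _ ≤ W := key_ineq n hn ε hε₀ hε₁ (norm_nonneg _) (norm_nonneg _) hγ hW hvW

/-- Real place, forward direction (`E_ψ(T) → E_{ψ⁺}(T⁺)` after acting). -/
lemma real_step₂ {m n : ℕ} (hm : 0 < m) (hn : 0 < n) {ε : ℝ} (hε₀ : 0 < ε) (hε₁ : ε < 1)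
    (α : Matrix (Fin m) (Fin m) ℝ) (β : Matrix (Fin n) (Fin m) ℝ) (γ : Matrix (Fin n) (Fin n) ℝ)
    (hα : opNorm α ^ m ≤ 1 + ε) (hβ : opNorm β ≤ ε / (4 * n)) (hγ : opNorm γ ^ n ≤ 1 + ε / 2)
    (f : ℝ → ℝ)
    (hanti : ∀ ⦃t₁ t₂ : ℝ⦄, 0 < t₁ → t₁ ≤ t₂ → f t₂ ≤ f t₁)
    (hone : ∀ ⦃t : ℝ⦄, t ≤ 1 → f t = 1)
    (x : Fin m → ℝ) (y : Fin n → ℝ) {TR : ℝ} (hTR : 1 ≤ TR)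
    (h1 : ‖x‖ ^ m ≤ f (‖y‖ ^ n)) (h2 : ‖y‖ ^ n ≤ TR) :
    ‖α.mulVec x‖ ^ m ≤ (1 + ε) * f ((1 + ε)⁻¹ * ‖β.mulVec x + γ.mulVec y‖ ^ n) ∧
      ‖β.mulVec x + γ.mulVec y‖ ^ n ≤ (1 + ε) * TR := by
  have hx1 : ‖x‖ ≤ 1 := by
    have := h1.trans (psi_le_one f hanti hone _)
    exact pow_le_one_iff_of_nonneg (norm_nonneg _) hm.ne' |>.mp this
  have hmax1 : (1:ℝ) ≤ max (‖y‖ ^ n) 1 := le_max_right _ _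
  have hW : (1:ℝ) ≤ (1 + ε) * max (‖y‖ ^ n) 1 := by nlinarith
  have hvW : (1 + ε) * ‖y‖ ^ n ≤ (1 + ε) * max (‖y‖ ^ n) 1 :=
    mul_le_mul_of_nonneg_left (le_max_left _ _) (by linarith)
  have hs := sprime_bound hn hε₀ hε₁ β γ hβ hγ x y hx1 hW hvW
  constructor
  · have ha1 : ‖α.mulVec x‖ ^ m ≤ (1 + ε) * f (‖y‖ ^ n) := by
      calc ‖α.mulVec x‖ ^ m ≤ (opNorm α * ‖x‖) ^ m :=
          pow_le_pow_left₀ (norm_nonneg _) (opNorm_mulVec_le α x) m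
        _ = opNorm α ^ m * ‖x‖ ^ m := mul_pow _ _ _
        _ ≤ (1 + ε) * f (‖y‖ ^ n) := by
            apply mul_le_mul hα h1 (by positivity) (by linarith)
    refine ha1.trans (mul_le_mul_of_nonneg_left ?_ (by linarith))
    apply psi_mono f hanti hone
    rw [inv_mul_le_iff₀ (by linarith : (0:ℝ) < 1 + ε)]
    exact hs
  · refine hs.trans (mul_le_mul_of_nonneg_left ?_ (by linarith))
    exact max_le h2 hTR

/-- Real place, inverse direction (`E_{ψ⁻}(T⁻) → E_ψ(T)` after acting by the inverse). -/
lemma real_step₁ {m n : ℕ} (hm : 0 < m) (hn : 0 < n) {ε : ℝ} (hε₀ : 0 < ε) (hε₁ : ε < 1)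
    (α : Matrix (Fin m) (Fin m) ℝ) (β : Matrix (Fin n) (Fin m) ℝ) (γ : Matrix (Fin n) (Fin n) ℝ)
    (hα : opNorm α ^ m ≤ 1 + ε) (hβ : opNorm β ≤ ε / (4 * n)) (hγ : opNorm γ ^ n ≤ 1 + ε / 2)
    (f : ℝ → ℝ)
    (hanti : ∀ ⦃t₁ t₂ : ℝ⦄, 0 < t₁ → t₁ ≤ t₂ → f t₂ ≤ f t₁)
    (hone : ∀ ⦃t : ℝ⦄, t ≤ 1 → f t = 1)
    (x : Fin m → ℝ) (y : Fin n → ℝ) {TR : ℝ} (hTR : 1 ≤ TR)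
    (h1 : ‖x‖ ^ m ≤ (1 + ε)⁻¹ * f ((1 + ε) * ‖y‖ ^ n)) (h2 : ‖y‖ ^ n ≤ (1 + ε)⁻¹ * TR) :
    ‖α.mulVec x‖ ^ m ≤ f (‖β.mulVec x + γ.mulVec y‖ ^ n) ∧
      ‖β.mulVec x + γ.mulVec y‖ ^ n ≤ TR := by
  have hε' : (0:ℝ) < 1 + ε := by linarith
  have hx1 : ‖x‖ ≤ 1 := by
    have hf1 : (1 + ε)⁻¹ * f ((1 + ε) * ‖y‖ ^ n) ≤ 1 := by
      have := psi_le_one f hanti hone ((1 + ε) * ‖y‖ ^ n)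
      calc (1 + ε)⁻¹ * f ((1 + ε) * ‖y‖ ^ n) ≤ (1 + ε)⁻¹ * 1 := by
            apply mul_le_mul_of_nonneg_left this (by positivity)
        _ ≤ 1 := by rw [mul_one]; apply inv_le_one_of_one_le₀; linarith
    exact pow_le_one_iff_of_nonneg (norm_nonneg _) hm.ne' |>.mp (h1.trans hf1)
  have hW : (1:ℝ) ≤ max ((1 + ε) * ‖y‖ ^ n) 1 := le_max_right _ _
  have hvW : (1 + ε) * ‖y‖ ^ n ≤ max ((1 + ε) * ‖y‖ ^ n) 1 := le_max_left _ _
  have hs := sprime_bound hn hε₀ hε₁ β γ hβ hγ x y hx1 hW hvW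
  constructor
  · have ha1 : ‖α.mulVec x‖ ^ m ≤ f ((1 + ε) * ‖y‖ ^ n) := by
      calc ‖α.mulVec x‖ ^ m ≤ (opNorm α * ‖x‖) ^ m :=
          pow_le_pow_left₀ (norm_nonneg _) (opNorm_mulVec_le α x) m
        _ = opNorm α ^ m * ‖x‖ ^ m := mul_pow _ _ _
        _ ≤ (1 + ε) * ((1 + ε)⁻¹ * f ((1 + ε) * ‖y‖ ^ n)) := by
            apply mul_le_mul hα h1 (by positivity) (by linarith)
        _ = f ((1 + ε) * ‖y‖ ^ n) := by field_simp
    exact ha1.trans (psi_mono f hanti hone hs)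
  · refine hs.trans (max_le ?_ hTR)
    calc (1 + ε) * ‖y‖ ^ n ≤ (1 + ε) * ((1 + ε)⁻¹ * TR) :=
        mul_le_mul_of_nonneg_left h2 (by linarith)
      _ = TR := by field_simp

/-- p-adic place step, used in both directions. -/
lemma padic_step {P : ℕ} [Fact P.Prime] {m n : ℕ} (hm : 0 < m) (hn : 0 < n)
    (A : Matrix (Fin m) (Fin m) ℚ_[P]) (B : Matrix (Fin n) (Fin m) ℚ_[P])
    (C : Matrix (Fin n) (Fin n) ℚ_[P])
    (hA : ∀ a b, ‖A a b‖ ≤ 1) (hB : ∀ a b, ‖B a b‖ ≤ 1) (hC : ∀ a b, ‖C a b‖ ≤ 1)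
    (f : ℝ → ℝ)
    (hanti : ∀ ⦃t₁ t₂ : ℝ⦄, 0 < t₁ → t₁ ≤ t₂ → f t₂ ≤ f t₁)
    (hone : ∀ ⦃t : ℝ⦄, t ≤ 1 → f t = 1)
    (x : Fin m → ℚ_[P]) (y : Fin n → ℚ_[P]) {TP : ℝ} (hTP : 1 ≤ TP)
    (h1 : ‖x‖ ^ m ≤ f (‖y‖ ^ n)) (h2 : ‖y‖ ^ n ≤ TP) :
    ‖A.mulVec x‖ ^ m ≤ f (‖B.mulVec x + C.mulVec y‖ ^ n) ∧
      ‖B.mulVec x + C.mulVec y‖ ^ n ≤ TP := by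
  have hx1 : ‖x‖ ≤ 1 := by
    have := h1.trans (psi_le_one f hanti hone _)
    exact pow_le_one_iff_of_nonneg (norm_nonneg _) hm.ne' |>.mp this
  have hBx : ‖B.mulVec x‖ ≤ 1 := padic_mulVec_le B hB x zero_le_one hx1
  have hCy : ‖C.mulVec y‖ ≤ ‖y‖ := padic_mulVec_le C hC y (norm_nonneg _) le_rfl
  have hs : ‖B.mulVec x + C.mulVec y‖ ≤ max 1 ‖y‖ := by
    have hC0 : (0:ℝ) ≤ max 1 ‖y‖ := le_trans zero_le_one (le_max_left _ _)
    rw [pi_norm_le_iff_of_nonneg hC0]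
    intro j
    rw [Pi.add_apply]
    calc ‖B.mulVec x j + C.mulVec y j‖ ≤ max ‖B.mulVec x j‖ ‖C.mulVec y j‖ :=
        IsUltrametricDist.norm_add_le_max _ _
      _ ≤ max 1 ‖y‖ :=
        max_le_max ((norm_le_pi_norm _ j).trans hBx) ((norm_le_pi_norm _ j).trans hCy)
  have hsn : ‖B.mulVec x + C.mulVec y‖ ^ n ≤ max (‖y‖ ^ n) 1 := by
    rcases le_total ‖y‖ 1 with hy | hy
    · have : ‖B.mulVec x + C.mulVec y‖ ≤ 1 := hs.trans (max_le le_rfl hy)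
      exact (pow_le_one₀ (norm_nonneg _) this).trans (le_max_right _ _)
    · have : ‖B.mulVec x + C.mulVec y‖ ≤ ‖y‖ := hs.trans (max_le hy le_rfl)
      exact (pow_le_pow_left₀ (norm_nonneg _) this n).trans (le_max_left _ _)
  constructor
  · have hAx : ‖A.mulVec x‖ ^ m ≤ ‖x‖ ^ m :=
      pow_le_pow_left₀ (norm_nonneg _) (padic_mulVec_le A hA x (norm_nonneg _) le_rfl) m
    exact hAx.trans (h1.trans (psi_mono f hanti hone hsn))
  · exact hsn.trans (max_le h2 hTP)

end Steps

/-- **Sandwich inclusions for perturbed approximating regions.**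
Let `ε ∈ (0,1)` and let `h ∈ ∏_{p ∈ S} H_p` be block lower-triangular with
`h_∞ ∈ H̃_{∞,ε} ∩ H̃_{∞,ε}⁻¹` and `h_p ∈ H_p(ℤ_p)` for all finite `p`.  Then for every
collection of approximating functions `ψ` and every
`T ∈ ℝ_{≥1} × ∏_{p ∈ S_f} {p^k : k ∈ ℕ}`,
`E_{ψ⁻_ε}(T⁻) ⊆ h·E_ψ(T) ⊆ E_{ψ⁺_ε}(T⁺)`. -/
theorem sandwich_inclusions
    (m n : ℕ) (hm : 0 < m) (hn : 0 < n)
    (s : ℕ) (p : Fin s → ℕ) [∀ i, Fact (p i).Prime] (hpinj : Function.Injective p)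
    (ε : ℝ) (hε₀ : 0 < ε) (hε₁ : ε < 1)
    (h : HElem m n s p) (hadm : h.isAdmissible ε)
    (ψ : ApproxFamily m n s p)
    (TR : ℝ) (hTR : 1 ≤ TR) (TP : Fin s → ℝ) (hTP : ∀ i, ∃ k : ℕ, TP i = (p i : ℝ) ^ k) :
    Eprod m n p (fun t => (1 + ε)⁻¹ * ψ.psiR ((1 + ε) * t)) ψ.psiP ((1 + ε)⁻¹ * TR) TP
        ⊆ h.act '' Eprod m n p ψ.psiR ψ.psiP TR TP ∧
      h.act '' Eprod m n p ψ.psiR ψ.psiP TR TP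
        ⊆ Eprod m n p (fun t => (1 + ε) * ψ.psiR ((1 + ε)⁻¹ * t)) ψ.psiP ((1 + ε) * TR) TP := by
  obtain ⟨hdetA, hdetC, ⟨hα, hγ, hβ⟩, ⟨hα', hγ', hβ'⟩, hPad⟩ := hadm
  have hε' : (0:ℝ) < 1 + ε := by linarith
  have hTP1 : ∀ i, 1 ≤ TP i := by
    intro i
    obtain ⟨k, hk⟩ := hTP i
    rw [hk]
    exact one_le_pow₀ (by exact_mod_cast (Fact.out : (p i).Prime).one_le)
  have hAP : ∀ i, ∀ a b, ‖h.aP i a b‖ ≤ 1 := fun i => (hPad i).1.1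
  have hAdet : ∀ i, ‖(h.aP i).det‖ = 1 := fun i => (hPad i).1.2
  have hCP : ∀ i, ∀ a b, ‖h.cP i a b‖ ≤ 1 := fun i => (hPad i).2.1.1
  have hCdet : ∀ i, ‖(h.cP i).det‖ = 1 := fun i => (hPad i).2.1.2
  have hBP : ∀ i, ∀ a b, ‖h.bP i a b‖ ≤ 1 := fun i => (hPad i).2.2
  have hAunit : ∀ i, IsUnit (h.aP i).det := by
    intro i
    apply isUnit_iff_ne_zero.mpr
    intro hz
    have := hAdet i
    rw [hz] at this
    simp at this
  have hCunit : ∀ i, IsUnit (h.cP i).det := by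
    intro i
    apply isUnit_iff_ne_zero.mpr
    intro hz
    have := hCdet i
    rw [hz] at this
    simp at this
  have hAPinv : ∀ i, ∀ a b, ‖(h.aP i)⁻¹ a b‖ ≤ 1 :=
    fun i => padic_inv_entry_le _ (hAP i) (hAdet i)
  have hCPinv : ∀ i, ∀ a b, ‖(h.cP i)⁻¹ a b‖ ≤ 1 :=
    fun i => padic_inv_entry_le _ (hCP i) (hCdet i)
  have hBPinv : ∀ i, ∀ a b, ‖(-((h.cP i)⁻¹ * h.bP i * (h.aP i)⁻¹)) a b‖ ≤ 1 := by
    intro i a b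
    rw [Matrix.neg_apply, norm_neg]
    exact padic_mul_entry_le _ _ (padic_mul_entry_le _ _ (hCPinv i) (hBP i)) (hAPinv i) a b
  constructor
  · -- first inclusion
    rintro ⟨⟨xR, xP⟩, ⟨yR, yP⟩⟩ hxy
    simp only [Eprod, Set.mem_setOf_eq] at hxy
    obtain ⟨h1, h2, h3⟩ := hxy
    refine ⟨((h.aR⁻¹.mulVec xR, fun i => ((h.aP i)⁻¹).mulVec (xP i)),
        ((-(h.cR⁻¹ * h.bR * h.aR⁻¹)).mulVec xR + h.cR⁻¹.mulVec yR,
         fun i => (-((h.cP i)⁻¹ * h.bP i * (h.aP i)⁻¹)).mulVec (xP i)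
            + ((h.cP i)⁻¹).mulVec (yP i))), ?_, ?_⟩
    · simp only [Eprod, Set.mem_setOf_eq]
      have hre := real_step₁ hm hn hε₀ hε₁ h.aR⁻¹ (-(h.cR⁻¹ * h.bR * h.aR⁻¹)) h.cR⁻¹
        hα' hβ' hγ' ψ.psiR ψ.antiR ψ.oneR xR yR hTR h1 h2
      refine ⟨hre.1, hre.2, fun i => ?_⟩
      exact padic_step hm hn _ _ _ (hAPinv i) (hBPinv i) (hCPinv i) (ψ.psiP i)
        (ψ.antiP i) (ψ.oneP i) (xP i) (yP i) (hTP1 i) (h3 i).1 (h3 i).2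
    · simp only [HElem.act, Prod.mk.injEq]
      refine ⟨⟨act_inv_fst _ hdetA xR, funext fun i => act_inv_fst _ (hAunit i) (xP i)⟩,
        act_inv_snd _ _ _ hdetA hdetC xR yR,
        funext fun i => act_inv_snd _ _ _ (hAunit i) (hCunit i) (xP i) (yP i)⟩
  · -- second inclusion
    rintro z ⟨⟨⟨xR, xP⟩, ⟨yR, yP⟩⟩, hxy, rfl⟩
    simp only [Eprod, Set.mem_setOf_eq] at hxy
    obtain ⟨h1, h2, h3⟩ := hxy
    simp only [Eprod, HElem.act, Set.mem_setOf_eq]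
    have hre := real_step₂ hm hn hε₀ hε₁ h.aR h.bR h.cR hα hβ hγ ψ.psiR ψ.antiR ψ.oneR
      xR yR hTR h1 h2
    refine ⟨hre.1, hre.2, fun i => ?_⟩
    exact padic_step hm hn _ _ _ (hAP i) (hBP i) (hCP i) (ψ.psiP i)
      (ψ.antiP i) (ψ.oneP i) (xP i) (yP i) (hTP1 i) (h3 i).1 (h3 i).2
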